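/- arXiv:1811.07834 — 2 statements merged into one kernel-verified Lean document; each statement's English description precedes it below -/
import Mathlib

section
/- (Lemma 1, Dense Sampling). Let K ⊆ ℝⁿ be compact with positive Lebesgue measure, and let μ be the uniform probability measure on K, i.e. the restriction of Lebesgue measure to K normalized to total mass 1. Let (X_k)_{k≥1} be an i.i.d. sequence of random vectors with law μ on some probability space. Let Ω ⊆ K be a Borel set with μ(Ω) > 0 and let ε > 0. Then the conditional probability that X_k lies within distance ε of an earlier sample landing in Ω, given that X_k ∈ Ω, tends to 1: lim_{k→∞} P(∃ j < k, X_j ∈ Ω ∧ ‖X_k − X_j‖ < ε | X_k ∈ Ω) = 1. -/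
open Set MeasureTheory ProbabilityTheory Filter

noncomputable section

/-- **Lemma 1 (Dense Sampling).** Let `μ` be the uniform probability measure on a compact set
`K ⊆ ℝⁿ` of positive Lebesgue measure, let `(X k)` be i.i.d. samples with law `μ`, and let
`Ω' ⊆ K` be Borel with `μ Ω' > 0`. Then the conditional probability that `X k` lies within
distance `ε` of some earlier sample landing in `Ω'`, given `X k ∈ Ω'`, tends to `1`. -/
theorem dense_sampling {n : ℕ}
    (K : Set (EuclideanSpace ℝ (Fin n))) (hK : IsCompact K) (hKpos : 0 < volume K)
    (μ : Measure (EuclideanSpace ℝ (Fin n)))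
    (hμ : μ = (volume K)⁻¹ • volume.restrict K)
    {Θ : Type*} {mΘ : MeasurableSpace Θ} (P : Measure Θ) [IsProbabilityMeasure P]
    (X : ℕ → Θ → EuclideanSpace ℝ (Fin n))
    (hmeas : ∀ k, Measurable (X k))
    (hindep : iIndepFun X P)
    (hlaw : ∀ k, Measure.map (X k) P = μ)
    (Ω' : Set (EuclideanSpace ℝ (Fin n))) (hΩ'meas : MeasurableSet Ω') (hΩ'sub : Ω' ⊆ K)
    (hΩ'pos : 0 < μ Ω')
    (ε : ℝ) (hε : 0 < ε) :
    Filter.Tendsto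
      (fun k : ℕ =>
        P[|{θ | X k θ ∈ Ω'}] {θ | ∃ j < k, X j θ ∈ Ω' ∧ ‖X k θ - X j θ‖ < ε})
      Filter.atTop (nhds 1) := by
  classical
  have hKfin : volume K ≠ ⊤ := hK.measure_lt_top.ne
  haveI hμprob : IsProbabilityMeasure μ := ⟨by
    rw [hμ]
    simp [Measure.restrict_apply_univ, ENNReal.inv_mul_cancel hKpos.ne' hKfin]⟩
  have hlawA : ∀ (k : ℕ) (A : Set (EuclideanSpace ℝ (Fin n))), MeasurableSet A →
      P ((X k) ⁻¹' A) = μ A := fun k A hA => by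
    rw [← hlaw k, Measure.map_apply (hmeas k) hA]
  -- finite cover of K by balls of radius ε/2
  obtain ⟨t, ht⟩ := hK.elim_finite_subcover
    (fun x : EuclideanSpace ℝ (Fin n) => Metric.ball x (ε / 2))
    (fun _ => Metric.isOpen_ball)
    (fun x _ => Set.mem_iUnion.2 ⟨x, Metric.mem_ball_self (by linarith)⟩)
  set A : EuclideanSpace ℝ (Fin n) → Set (EuclideanSpace ℝ (Fin n)) :=
    fun i => Ω' ∩ Metric.ball i (ε / 2) with hA
  have hAmeas : ∀ i, MeasurableSet (A i) := fun i => hΩ'meas.inter measurableSet_ball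
  -- the success sets
  set S : ℕ → Set Θ := fun k => {θ | ∃ j < k, X j θ ∈ Ω' ∧ ‖X k θ - X j θ‖ < ε} with hS
  have hSmeas : ∀ k, MeasurableSet (S k) := by
    intro k
    have hSeq : S k = ⋃ j ∈ Finset.range k,
        ((X j) ⁻¹' Ω' ∩ {θ | ‖X k θ - X j θ‖ < ε}) := by
      ext θ
      simp only [hS, Set.mem_setOf_eq, Set.mem_iUnion, Finset.mem_range, Set.mem_inter_iff,
        Set.mem_preimage, exists_prop]
    rw [hSeq]
    refine MeasurableSet.biUnion (Finset.range k).countable_toSet fun j _ => ?_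
    exact ((hmeas j) hΩ'meas).inter
      (measurableSet_lt ((hmeas k).sub (hmeas j)).norm measurable_const)
  -- key independence computation
  have hkey : ∀ (i : EuclideanSpace ℝ (Fin n)) (k : ℕ),
      P ((X k) ⁻¹' (A i) ∩ ⋂ j ∈ Finset.range k, (X j) ⁻¹' (A i)ᶜ)
        = μ (A i) * (1 - μ (A i)) ^ k := by
    intro i k
    set f : ℕ → Set Θ := fun j => if j = k then (X k) ⁻¹' (A i) else (X j) ⁻¹' (A i)ᶜ with hf
    have hmeasf : ∀ j ∈ Finset.range (k + 1),
        MeasurableSet[MeasurableSpace.comap (X j) inferInstance] (f j) := by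
      intro j _
      by_cases h : j = k
      · subst h; simp only [hf, if_pos rfl]
        exact ⟨A i, hAmeas i, rfl⟩
      · simp only [hf, if_neg h]
        exact ⟨(A i)ᶜ, (hAmeas i).compl, rfl⟩
    have hprod := hindep.meas_biInter (S := Finset.range (k + 1)) (s := f) hmeasf
    rw [Finset.range_add_one, Finset.set_biInter_insert,
      Finset.prod_insert (by simp)] at hprod
    have h1 : f k = (X k) ⁻¹' (A i) := by simp [hf]
    have h2 : ∀ j ∈ Finset.range k, f j = (X j) ⁻¹' (A i)ᶜ := by
      intro j hj; simp [hf, (Finset.mem_range.mp hj).ne]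
    have hiInter : (⋂ j ∈ Finset.range k, f j) = ⋂ j ∈ Finset.range k, (X j) ⁻¹' (A i)ᶜ :=
      Set.iInter₂_congr h2
    have hPcompl : ∀ j, P ((X j) ⁻¹' (A i)ᶜ) = 1 - μ (A i) := fun j => by
      rw [hlawA j _ (hAmeas i).compl, prob_compl_eq_one_sub (hAmeas i)]
    rw [h1, hiInter, hlawA k _ (hAmeas i)] at hprod
    rw [hprod]
    congr 1
    rw [Finset.prod_congr rfl fun j hj => by rw [h2 j hj, hPcompl j]]
    simp [Finset.prod_const]
  -- the failure event
  set B : ℕ → Set Θ := fun k => (X k) ⁻¹' Ω' with hB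
  set F : ℕ → Set Θ := fun k => B k \ S k with hF
  have hsub : ∀ k, F k ⊆ ⋃ i ∈ t,
      ((X k) ⁻¹' (A i) ∩ ⋂ j ∈ Finset.range k, (X j) ⁻¹' (A i)ᶜ) := by
    intro k θ hθ
    obtain ⟨hBk, hnS⟩ := hθ
    have hXkK : X k θ ∈ K := hΩ'sub hBk
    obtain ⟨i, hit, hball⟩ := Set.mem_iUnion₂.mp (ht hXkK)
    refine Set.mem_iUnion₂.mpr ⟨i, hit, ⟨hBk, hball⟩, ?_⟩
    refine Set.mem_iInter₂.mpr fun j hj hAj => ?_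
    refine hnS ⟨j, Finset.mem_range.mp hj, hAj.1, ?_⟩
    have h1 : dist (X k θ) i < ε / 2 := Metric.mem_ball.mp hball
    have h2 : dist (X j θ) i < ε / 2 := Metric.mem_ball.mp hAj.2
    calc ‖X k θ - X j θ‖ = dist (X k θ) (X j θ) := (dist_eq_norm _ _).symm
      _ ≤ dist (X k θ) i + dist (X j θ) i := dist_triangle_right _ _ _
      _ < ε / 2 + ε / 2 := add_lt_add h1 h2
      _ = ε := by ring
  have hFle : ∀ k, P (F k) ≤ ∑ i ∈ t, μ (A i) * (1 - μ (A i)) ^ k := fun k =>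
    (measure_mono (hsub k)).trans <| (measure_biUnion_finset_le t _).trans <|
      le_of_eq (Finset.sum_congr rfl fun i _ => hkey i k)
  have hF0 : Tendsto (fun k => P (F k)) atTop (nhds 0) := by
    have hsum : Tendsto (fun k => ∑ i ∈ t, μ (A i) * (1 - μ (A i)) ^ k) atTop (nhds 0) := by
      have h0 : (0 : ENNReal) = ∑ _i ∈ t, 0 := by simp
      rw [h0]
      refine tendsto_finset_sum t fun i _ => ?_
      rcases eq_or_ne (μ (A i)) 0 with hz | hz
      · simp [hz]
      · have hlt : 1 - μ (A i) < 1 :=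
          ENNReal.sub_lt_self ENNReal.one_ne_top one_ne_zero hz
        have hpow := ENNReal.tendsto_pow_atTop_nhds_zero_of_lt_one hlt
        have := ENNReal.Tendsto.const_mul (a := μ (A i)) hpow
          (Or.inr (measure_ne_top μ (A i)))
        simpa using this
    exact tendsto_of_tendsto_of_tendsto_of_le_of_le tendsto_const_nhds hsum
      (fun k => zero_le) hFle
  have hcfin : μ Ω' ≠ ⊤ := measure_ne_top μ Ω'
  have heq : ∀ k : ℕ,
      P[|{θ | X k θ ∈ Ω'}] {θ | ∃ j < k, X j θ ∈ Ω' ∧ ‖X k θ - X j θ‖ < ε}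
        = (μ Ω')⁻¹ * (μ Ω' - P (F k)) := by
    intro k
    have hBk : MeasurableSet (B k) := (hmeas k) hΩ'meas
    have h1 : {θ | X k θ ∈ Ω'} = B k := rfl
    have h2 : {θ | ∃ j < k, X j θ ∈ Ω' ∧ ‖X k θ - X j θ‖ < ε} = S k := rfl
    rw [h1, h2, cond_apply hBk, hlawA k Ω' hΩ'meas]
    congr 1
    have hadd := measure_inter_add_diff (μ := P) (B k) (hSmeas k)
    have hPB : P (B k) = μ Ω' := hlawA k Ω' hΩ'meas
    rw [hPB] at hadd
    exact ENNReal.eq_sub_of_add_eq (measure_ne_top P _) hadd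
  simp only [heq]
  have hfinal : Tendsto (fun k => (μ Ω')⁻¹ * (μ Ω' - P (F k))) atTop
      (nhds ((μ Ω')⁻¹ * (μ Ω' - 0))) := by
    refine ENNReal.Tendsto.const_mul
      (ENNReal.Tendsto.sub tendsto_const_nhds hF0 (Or.inl hcfin)) ?_
    exact Or.inr (ENNReal.inv_ne_top.mpr hΩ'pos.ne')
  simpa [ENNReal.inv_mul_cancel hΩ'pos.ne' hcfin] using hfinal
end
end

section
/- (Ancestor consolidation: the transitive closure of the safe-reachability relation collapses). Fix a free set F ⊆ ℝ^d and define the relation R on ℝⁿ by R p q ↔ q ∈ Ω_F({p}, F). If p ∈ ℝⁿ satisfies φ_E(p) ⊆ F and q is related to p by the reflexive–transitive closure of R (i.e. Relation.ReflTransGen R p q), then q ∈ Ω_F({p}, F). Hence whenever a graph vertex is added to the backward reachable graph, all of its ancestors along safe edges also belong to the safe reachable set. -/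
open Set MeasureTheory ProbabilityTheory Filter Pointwise

noncomputable section

/-- The robust footprint of a planning state `p`: the projection of `p` onto location
coordinates, Minkowski-summed with the (enlarged) vehicle footprint `E`. -/
def robustFootprint {n d : ℕ}
    (proj : EuclideanSpace ℝ (Fin n) →ₗ[ℝ] EuclideanSpace ℝ (Fin d))
    (E : Set (EuclideanSpace ℝ (Fin d))) (p : EuclideanSpace ℝ (Fin n)) :
    Set (EuclideanSpace ℝ (Fin d)) :=
  {proj p} + E

/-- An admissible trajectory of the planning dynamics `f` with control constraint set `C`,
from state `p`, over the time interval `[t₀, t₁]`. -/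
def IsAdmissibleOn {n m : ℕ}
    (f : EuclideanSpace ℝ (Fin n) → EuclideanSpace ℝ (Fin m) → EuclideanSpace ℝ (Fin n))
    (C : Set (EuclideanSpace ℝ (Fin m))) (p : EuclideanSpace ℝ (Fin n)) (t₀ t₁ : ℝ)
    (ξ : ℝ → EuclideanSpace ℝ (Fin n)) : Prop :=
  Continuous ξ ∧ ξ t₀ = p ∧
    ∃ c : ℝ → EuclideanSpace ℝ (Fin m), (∀ τ, c τ ∈ C) ∧
      ∃ S : Set ℝ, S.Finite ∧ ∀ τ ∈ Icc t₀ t₁ \ S, HasDerivAt ξ (f (ξ τ) (c τ)) τ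

/-- A trajectory is safe with respect to the free set `F` on `[t₀, t₁]` if its robust
footprint stays inside `F` throughout. -/
def IsSafeOn {n d : ℕ}
    (proj : EuclideanSpace ℝ (Fin n) →ₗ[ℝ] EuclideanSpace ℝ (Fin d))
    (E F : Set (EuclideanSpace ℝ (Fin d))) (t₀ t₁ : ℝ)
    (ξ : ℝ → EuclideanSpace ℝ (Fin n)) : Prop :=
  ∀ τ ∈ Icc t₀ t₁, robustFootprint proj E (ξ τ) ⊆ F

/-- The safe forward reachable set `Ω_F(L, F)`. -/
def OmegaF {n m d : ℕ}
    (f : EuclideanSpace ℝ (Fin n) → EuclideanSpace ℝ (Fin m) → EuclideanSpace ℝ (Fin n))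
    (C : Set (EuclideanSpace ℝ (Fin m)))
    (proj : EuclideanSpace ℝ (Fin n) →ₗ[ℝ] EuclideanSpace ℝ (Fin d))
    (E : Set (EuclideanSpace ℝ (Fin d)))
    (L : Set (EuclideanSpace ℝ (Fin n))) (F : Set (EuclideanSpace ℝ (Fin d))) :
    Set (EuclideanSpace ℝ (Fin n)) :=
  {p' | ∃ p ∈ L, ∃ T, 0 ≤ T ∧ ∃ ξ : ℝ → EuclideanSpace ℝ (Fin n),
    IsAdmissibleOn f C p 0 T ξ ∧ IsSafeOn proj E F 0 T ξ ∧ ξ T = p'}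

/-- The safe backward reachable set `Ω_B(L, F)`. -/
def OmegaB {n m d : ℕ}
    (f : EuclideanSpace ℝ (Fin n) → EuclideanSpace ℝ (Fin m) → EuclideanSpace ℝ (Fin n))
    (C : Set (EuclideanSpace ℝ (Fin m)))
    (proj : EuclideanSpace ℝ (Fin n) →ₗ[ℝ] EuclideanSpace ℝ (Fin d))
    (E : Set (EuclideanSpace ℝ (Fin d)))
    (L : Set (EuclideanSpace ℝ (Fin n))) (F : Set (EuclideanSpace ℝ (Fin d))) :
    Set (EuclideanSpace ℝ (Fin n)) :=
  {p' | ∃ T, 0 ≤ T ∧ ∃ ξ : ℝ → EuclideanSpace ℝ (Fin n),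
    IsAdmissibleOn f C p' 0 T ξ ∧ IsSafeOn proj E F 0 T ξ ∧ ξ T ∈ L}

/-- Reachability is transitive: concatenation of trajectories. -/
lemma omegaF_trans {n m d : ℕ}
    (f : EuclideanSpace ℝ (Fin n) → EuclideanSpace ℝ (Fin m) → EuclideanSpace ℝ (Fin n))
    (C : Set (EuclideanSpace ℝ (Fin m)))
    (proj : EuclideanSpace ℝ (Fin n) →ₗ[ℝ] EuclideanSpace ℝ (Fin d))
    (E : Set (EuclideanSpace ℝ (Fin d)))
    (F : Set (EuclideanSpace ℝ (Fin d)))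
    {p q r : EuclideanSpace ℝ (Fin n)}
    (hq : q ∈ OmegaF f C proj E {p} F) (hr : r ∈ OmegaF f C proj E {q} F) :
    r ∈ OmegaF f C proj E {p} F := by
  obtain ⟨p₁, hp₁, T₁, hT₁, ξ₁, ⟨hcont₁, hinit₁, c₁, hc₁, S₁, hS₁fin, hd₁⟩, hsafe₁, hend₁⟩ := hq
  obtain ⟨q₂, hq₂, T₂, hT₂, ξ₂, ⟨hcont₂, hinit₂, c₂, hc₂, S₂, hS₂fin, hd₂⟩, hsafe₂, hend₂⟩ := hr
  rw [Set.mem_singleton_iff] at hp₁ hq₂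
  subst hp₁; subst hq₂
  set ξ : ℝ → EuclideanSpace ℝ (Fin n) :=
    fun τ => if τ ≤ T₁ then ξ₁ τ else ξ₂ (τ - T₁) with hξ
  have hjoin : ξ₁ T₁ = ξ₂ 0 := by rw [hend₁, hinit₂]
  refine ⟨p₁, rfl, T₁ + T₂, by linarith, ξ, ⟨?_, ?_, ?_⟩, ?_, ?_⟩
  · -- continuity
    refine Continuous.if_le hcont₁ (hcont₂.comp (continuous_id.sub continuous_const))
      continuous_id continuous_const ?_
    intro x hx
    subst hx
    simp [hjoin]
  · simp [hξ, hT₁, hinit₁]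
  · refine ⟨fun τ => if τ ≤ T₁ then c₁ τ else c₂ (τ - T₁),
      fun τ => by by_cases h : τ ≤ T₁ <;> simp [h, hc₁, hc₂], ?_⟩
    refine ⟨S₁ ∪ ((· + T₁) '' S₂) ∪ {T₁}, ?_, ?_⟩
    · exact ((hS₁fin.union (hS₂fin.image _)).union (Set.finite_singleton _))
    · rintro τ ⟨⟨h0, hT⟩, hS⟩
      simp only [Set.mem_union, Set.mem_singleton_iff, not_or] at hS
      obtain ⟨⟨hS₁, hS₂⟩, hne⟩ := hS
      rcases lt_or_gt_of_ne hne with hlt | hgt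
      · have hd := hd₁ τ ⟨⟨h0, hlt.le⟩, hS₁⟩
        have heq : ξ =ᶠ[nhds τ] ξ₁ := by
          filter_upwards [Iio_mem_nhds hlt] with x hx
          simp only [hξ]
          rw [if_pos (le_of_lt (mem_Iio.mp hx))]
        have := hd.congr_of_eventuallyEq heq
        simpa [hξ, hlt.le] using this
      · have hmem : τ - T₁ ∈ Icc 0 T₂ \ S₂ := by
          refine ⟨⟨by linarith, by linarith⟩, fun hmem => hS₂ ?_⟩
          exact ⟨τ - T₁, hmem, by ring⟩
        have hd := hd₂ _ hmem
        have hc : HasDerivAt (fun x : ℝ => ξ₂ (x - T₁))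
            (f (ξ₂ (τ - T₁)) (c₂ (τ - T₁))) τ := by
          have := hd.scomp τ ((hasDerivAt_id τ).sub_const T₁)
          rw [one_smul] at this
          exact this
        have heq : ξ =ᶠ[nhds τ] fun x => ξ₂ (x - T₁) := by
          filter_upwards [Ioi_mem_nhds hgt] with x hx
          simp [hξ, not_le.mpr (mem_Ioi.mp hx)]
        have := hc.congr_of_eventuallyEq heq
        simpa [hξ, not_le.mpr hgt] using this
  · -- safety
    intro τ hτ
    by_cases h : τ ≤ T₁
    · simpa [hξ, h] using hsafe₁ τ ⟨hτ.1, h⟩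
    · have : τ - T₁ ∈ Icc 0 T₂ := ⟨by linarith [not_le.mp h], by linarith [hτ.2]⟩
      simpa [hξ, h] using hsafe₂ _ this
  · -- endpoint
    by_cases h : T₁ + T₂ ≤ T₁
    · have hT₂0 : T₂ = 0 := le_antisymm (by linarith) hT₂
      subst hT₂0
      simp only [hξ, add_zero, le_refl, if_pos]
      rw [hend₁, ← hinit₂, hend₂]
    · simp [hξ, h, ← hend₂]

/-- **Ancestor consolidation:** the reflexive–transitive closure of the safe-reachability
relation collapses: if `φ_E(p) ⊆ F` and `q` is reachable from `p` along a chain of safe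
edges, then `q ∈ Ω_F({p}, F)`. -/
theorem ancestor_consolidation {n m d : ℕ}
    (f : EuclideanSpace ℝ (Fin n) → EuclideanSpace ℝ (Fin m) → EuclideanSpace ℝ (Fin n))
    (C : Set (EuclideanSpace ℝ (Fin m))) (hC : C.Nonempty)
    (proj : EuclideanSpace ℝ (Fin n) →ₗ[ℝ] EuclideanSpace ℝ (Fin d))
    (E : Set (EuclideanSpace ℝ (Fin d)))
    (F : Set (EuclideanSpace ℝ (Fin d)))
    (R : EuclideanSpace ℝ (Fin n) → EuclideanSpace ℝ (Fin n) → Prop)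
    (hR : ∀ p q, R p q ↔ q ∈ OmegaF f C proj E {p} F)
    (p q : EuclideanSpace ℝ (Fin n))
    (hp : robustFootprint proj E p ⊆ F)
    (hpq : Relation.ReflTransGen R p q) :
    q ∈ OmegaF f C proj E {p} F := by
  induction hpq with
  | refl =>
      obtain ⟨c₀, hc₀⟩ := hC
      refine ⟨p, rfl, 0, le_refl 0, fun _ => p, ⟨continuous_const, rfl,
        fun _ => c₀, fun _ => hc₀, {0}, Set.finite_singleton _, ?_⟩, ?_, rfl⟩
      · rintro τ ⟨hτ, hτS⟩
        exact absurd (le_antisymm hτ.2 hτ.1) hτS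
      · intro τ hτ
        exact hp
  | tail hab hbc ih =>
      exact omegaF_trans f C proj E F ih ((hR _ _).mp hbc)
end
end
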